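/- For every A > 0 there exists ε₀ > 0 such that for all ε ∈ (0, ε₀] the map (x, y) ↦ (F^ε(x,y), G(x,y)) is injective on the strip [−Aε, Aε] × ℝⁿ. -/

import Mathlib

/-- `B^ε(y) = (1 − εβ(y))/(1 + εβ(y))`. -/
noncomputable def Beps {n : ℕ} (β : EuclideanSpace ℝ (Fin n) → ℝ) (ε : ℝ)
    (y : EuclideanSpace ℝ (Fin n)) : ℝ :=
  (1 - ε * β y) / (1 + ε * β y)

/-- `F^ε(x,y) = x + x⁺·(B^ε(y) − 1)`. -/
noncomputable def Feps {n : ℕ} (β : EuclideanSpace ℝ (Fin n) → ℝ) (ε : ℝ)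
    (x : ℝ) (y : EuclideanSpace ℝ (Fin n)) : ℝ :=
  x + max x 0 * (Beps β ε y - 1)

/-- `G(x,y) = y − x·θ(y)`. -/
noncomputable def Gfun {n : ℕ}
    (θ : EuclideanSpace ℝ (Fin n) → EuclideanSpace ℝ (Fin n))
    (x : ℝ) (y : EuclideanSpace ℝ (Fin n)) : EuclideanSpace ℝ (Fin n) :=
  y - x • θ y

/- STATEMENT 9: For every A > 0 there exists ε₀ > 0 such that for all ε ∈ (0, ε₀] the
map (x, y) ↦ (F^ε(x,y), G(x,y)) is injective on the strip [−Aε, Aε] × ℝⁿ. -/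
set_option maxHeartbeats 1000000 in
theorem stmt_9 (n : ℕ) (hn : 1 ≤ n)
    (β : EuclideanSpace ℝ (Fin n) → ℝ)
    (hβ : ContDiff ℝ 1 β)
    (hβbd : BddAbove (Set.range fun y => |β y|))
    (hβ'bd : BddAbove (Set.range fun y => ‖fderiv ℝ β y‖))
    (θ : EuclideanSpace ℝ (Fin n) → EuclideanSpace ℝ (Fin n))
    (hθ : ContDiff ℝ 1 θ)
    (hθbd : BddAbove (Set.range fun y => ‖θ y‖))
    (hθ'bd : BddAbove (Set.range fun y => ‖fderiv ℝ θ y‖)) :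
    ∀ A > 0, ∃ ε₀ > 0, ∀ ε : ℝ, 0 < ε → ε ≤ ε₀ →
      Set.InjOn
        (fun p : ℝ × EuclideanSpace ℝ (Fin n) => (Feps β ε p.1 p.2, Gfun θ p.1 p.2))
        (Set.Icc (-(A * ε)) (A * ε) ×ˢ (Set.univ : Set (EuclideanSpace ℝ (Fin n)))) := by
  intro A hA
  set M : ℝ := sSup (Set.range fun y => |β y|) with hMdef
  set Kb : ℝ := sSup (Set.range fun y => ‖fderiv ℝ β y‖) with hKbdef
  set T : ℝ := sSup (Set.range fun y => ‖θ y‖) with hTdef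
  set L : ℝ := sSup (Set.range fun y => ‖fderiv ℝ θ y‖) with hLdef
  have hM : ∀ y, |β y| ≤ M := fun y => le_csSup hβbd ⟨y, rfl⟩
  have hKb : ∀ y, ‖fderiv ℝ β y‖ ≤ Kb := fun y => le_csSup hβ'bd ⟨y, rfl⟩
  have hT : ∀ y, ‖θ y‖ ≤ T := fun y => le_csSup hθbd ⟨y, rfl⟩
  have hL : ∀ y, ‖fderiv ℝ θ y‖ ≤ L := fun y => le_csSup hθ'bd ⟨y, rfl⟩
  have hM0 : 0 ≤ M := le_trans (abs_nonneg _) (hM 0)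
  have hKb0 : 0 ≤ Kb := le_trans (norm_nonneg _) (hKb 0)
  have hT0 : 0 ≤ T := le_trans (norm_nonneg _) (hT 0)
  have hL0 : 0 ≤ L := le_trans (norm_nonneg _) (hL 0)
  have hθLip : ∀ y₁ y₂, ‖θ y₁ - θ y₂‖ ≤ L * ‖y₁ - y₂‖ := fun y₁ y₂ =>
    Convex.norm_image_sub_le_of_norm_fderiv_le
      (fun x _ => (hθ.differentiable one_ne_zero).differentiableAt)
      (fun x _ => hL x) convex_univ (Set.mem_univ y₂) (Set.mem_univ y₁)
  have hβLip : ∀ y₁ y₂, |β y₁ - β y₂| ≤ Kb * ‖y₁ - y₂‖ := by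
    intro y₁ y₂
    have := Convex.norm_image_sub_le_of_norm_fderiv_le
      (fun x _ => (hβ.differentiable one_ne_zero).differentiableAt)
      (fun x _ => hKb x) convex_univ (Set.mem_univ y₂) (Set.mem_univ y₁)
    simpa [Real.norm_eq_abs] using this
  set D : ℝ := 1 + 5 * M + A * L + 16 * A * Kb * T with hDdef
  have hD1 : 1 ≤ D := by
    nlinarith [mul_nonneg hA.le hL0,
      mul_nonneg (mul_nonneg (mul_nonneg (by norm_num : (0:ℝ) ≤ 16) hA.le) hKb0) hT0]
  have hD0 : 0 < D := lt_of_lt_of_le one_pos hD1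
  have hAL0 : 0 ≤ A * L := mul_nonneg hA.le hL0
  have hAKT0 : (0:ℝ) ≤ 16 * A * Kb * T := by positivity
  refine ⟨1 / (2 * D), by positivity, ?_⟩
  intro ε hε hεD
  have hεD' : ε * (2 * D) ≤ 1 := (le_div_iff₀ (by positivity)).mp hεD
  have key : ∀ c : ℝ, 0 ≤ c → 2 * c ≤ 2 * D → ε * c ≤ 1 / 2 := by
    intro c hc h
    nlinarith [mul_le_mul_of_nonneg_left h hε.le]
  have hε1 : ε ≤ 1 := by nlinarith
  have hεM : ε * M ≤ 1 / 2 := key M hM0 (by linarith)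
  have hAL : ε * (A * L) ≤ 1 / 2 := key (A * L) (mul_nonneg hA.le hL0) (by linarith)
  have hcontr : ε * (4 * M + 16 * A * Kb * T) ≤ 1 / 2 := by
    refine key _ ?_ ?_
    · linarith
    · linarith
  -- denominator and numerator bounds
  have hβb : ∀ y, |ε * β y| ≤ 1 / 2 := by
    intro y
    rw [abs_mul, abs_of_pos hε]
    calc ε * |β y| ≤ ε * M := mul_le_mul_of_nonneg_left (hM y) hε.le
      _ ≤ 1 / 2 := hεM
  have hden : ∀ y, (1:ℝ) / 2 ≤ 1 + ε * β y := by
    intro y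
    have h1 := abs_le.mp (hβb y)
    linarith [h1.1]
  have hnum : ∀ y, (1:ℝ) / 2 ≤ 1 - ε * β y := by
    intro y
    have h1 := abs_le.mp (hβb y)
    linarith [h1.2]
  have hBpos : ∀ y, 0 < Beps β ε y := fun y =>
    div_pos (by linarith [hnum y]) (by linarith [hden y])
  have hFneg : ∀ x y, x ≤ 0 → Feps β ε x y = x := by
    intro x y hx; unfold Feps; rw [max_eq_right hx]; ring
  have hFpos : ∀ x y, 0 ≤ x → Feps β ε x y = x * Beps β ε y := by
    intro x y hx; unfold Feps; rw [max_eq_left hx]; ring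
  -- bound |1 - B|
  have h1B : ∀ y, |1 - Beps β ε y| ≤ 4 * ε * M := by
    intro y
    have hd := hden y
    have hkey : (1 - Beps β ε y) * (1 + ε * β y) = 2 * (ε * β y) := by
      unfold Beps; field_simp; ring
    have h2 : |1 - Beps β ε y| * (1 + ε * β y) = |2 * (ε * β y)| := by
      rw [← abs_of_pos (show (0:ℝ) < 1 + ε * β y by linarith), ← abs_mul, hkey]
    have h3 : |2 * (ε * β y)| ≤ 2 * (ε * M) := by
      rw [abs_mul, abs_of_nonneg (by norm_num : (0:ℝ) ≤ 2)]
      have := hβb y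
      nlinarith [abs_le.mp (hβb y), hM y, abs_mul ε (β y), abs_of_pos hε,
        mul_le_mul_of_nonneg_left (hM y) hε.le]
    nlinarith [abs_nonneg (1 - Beps β ε y),
      mul_le_mul_of_nonneg_left hd (abs_nonneg (1 - Beps β ε y)), h2, h3]
  -- Lipschitz bound on B
  have hBB : ∀ y₁ y₂, |Beps β ε y₂ - Beps β ε y₁| ≤ 8 * ε * Kb * ‖y₁ - y₂‖ := by
    intro y₁ y₂
    have hd1 := hden y₁
    have hd2 := hden y₂
    have hkey : (Beps β ε y₂ - Beps β ε y₁) * ((1 + ε * β y₁) * (1 + ε * β y₂))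
        = 2 * (ε * (β y₁ - β y₂)) := by
      unfold Beps
      field_simp
      ring
    have hprod : (1:ℝ) / 4 ≤ (1 + ε * β y₁) * (1 + ε * β y₂) := by nlinarith
    have h2 : |Beps β ε y₂ - Beps β ε y₁| * ((1 + ε * β y₁) * (1 + ε * β y₂))
        = |2 * (ε * (β y₁ - β y₂))| := by
      rw [← abs_of_pos (show (0:ℝ) < (1 + ε * β y₁) * (1 + ε * β y₂) by linarith),
        ← abs_mul, hkey]
    have h3 : |2 * (ε * (β y₁ - β y₂))| ≤ 2 * (ε * (Kb * ‖y₁ - y₂‖)) := by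
      rw [abs_mul, abs_of_nonneg (by norm_num : (0:ℝ) ≤ 2), abs_mul, abs_of_pos hε]
      have := mul_le_mul_of_nonneg_left (hβLip y₁ y₂) hε.le
      linarith
    nlinarith [abs_nonneg (Beps β ε y₂ - Beps β ε y₁),
      mul_le_mul_of_nonneg_left hprod (abs_nonneg (Beps β ε y₂ - Beps β ε y₁)), h2, h3]
  -- bound from the G-equation
  have hGb : ∀ (x₁ x₂ : ℝ) (y₁ y₂ : EuclideanSpace ℝ (Fin n)), |x₂| ≤ A * ε →
      Gfun θ x₁ y₁ = Gfun θ x₂ y₂ → ‖y₁ - y₂‖ ≤ 2 * T * |x₁ - x₂| := by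
    intro x₁ x₂ y₁ y₂ hx₂ hGe
    simp only [Gfun] at hGe
    have h0 : y₁ - y₂ = (x₁ - x₂) • θ y₁ + x₂ • (θ y₁ - θ y₂) := by
      have h2 : y₁ - y₂ = x₁ • θ y₁ - x₂ • θ y₂ := sub_eq_sub_iff_sub_eq_sub.mp hGe
      rw [h2]; module
    have hb : ‖y₁ - y₂‖ ≤ |x₁ - x₂| * T + (A * ε) * (L * ‖y₁ - y₂‖) := by
      calc ‖y₁ - y₂‖ = ‖(x₁ - x₂) • θ y₁ + x₂ • (θ y₁ - θ y₂)‖ := by rw [← h0]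
        _ ≤ ‖(x₁ - x₂) • θ y₁‖ + ‖x₂ • (θ y₁ - θ y₂)‖ := norm_add_le _ _
        _ = |x₁ - x₂| * ‖θ y₁‖ + |x₂| * ‖θ y₁ - θ y₂‖ := by
            rw [norm_smul, norm_smul, Real.norm_eq_abs, Real.norm_eq_abs]
        _ ≤ |x₁ - x₂| * T + (A * ε) * (L * ‖y₁ - y₂‖) :=
            add_le_add (mul_le_mul_of_nonneg_left (hT y₁) (abs_nonneg _))
              (mul_le_mul hx₂ (hθLip y₁ y₂) (norm_nonneg _) (by positivity))
    nlinarith [norm_nonneg (y₁ - y₂), abs_nonneg (x₁ - x₂),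
      mul_le_mul_of_nonneg_right hAL (norm_nonneg (y₁ - y₂))]
  -- main argument
  rintro ⟨x₁, y₁⟩ ⟨hpx₁, -⟩ ⟨x₂, y₂⟩ ⟨hpx₂, -⟩ heq
  simp only [Prod.mk.injEq] at heq
  obtain ⟨hF, hG⟩ := heq
  have hx₁abs : |x₁| ≤ A * ε := abs_le.mpr ⟨hpx₁.1, hpx₁.2⟩
  have hx₂abs : |x₂| ≤ A * ε := abs_le.mpr ⟨hpx₂.1, hpx₂.2⟩
  have yeq_of_xeq : x₁ = x₂ → y₁ = y₂ := by
    intro hx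
    have he := hGb x₁ x₂ y₁ y₂ hx₂abs hG
    rw [hx, sub_self, abs_zero] at he
    have : ‖y₁ - y₂‖ = 0 := le_antisymm (by linarith) (norm_nonneg _)
    have := norm_sub_eq_zero_iff.mp this
    exact this
  rcases le_or_gt x₁ 0 with hx1 | hx1 <;> rcases le_or_gt x₂ 0 with hx2 | hx2
  · -- both nonpositive
    rw [hFneg x₁ y₁ hx1, hFneg x₂ y₂ hx2] at hF
    exact Prod.ext hF (yeq_of_xeq hF)
  · -- x₁ ≤ 0 < x₂ : contradiction
    rw [hFneg x₁ y₁ hx1, hFpos x₂ y₂ hx2.le] at hF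
    exact absurd hF (by nlinarith [mul_pos hx2 (hBpos y₂)])
  · -- x₂ ≤ 0 < x₁ : contradiction
    rw [hFpos x₁ y₁ hx1.le, hFneg x₂ y₂ hx2] at hF
    exact absurd hF (by nlinarith [mul_pos hx1 (hBpos y₁)])
  · -- both positive
    rw [hFpos x₁ y₁ hx1.le, hFpos x₂ y₂ hx2.le] at hF
    have hkey : x₁ - x₂ = (x₁ - x₂) * (1 - Beps β ε y₁) + x₂ * (Beps β ε y₂ - Beps β ε y₁) := by
      linear_combination hF
    have he := hGb x₁ x₂ y₁ y₂ hx₂abs hG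
    have habs : |x₁ - x₂| ≤ |x₁ - x₂| * |1 - Beps β ε y₁| + |x₂| * |Beps β ε y₂ - Beps β ε y₁| := by
      calc |x₁ - x₂| = |(x₁ - x₂) * (1 - Beps β ε y₁) + x₂ * (Beps β ε y₂ - Beps β ε y₁)| := by
            rw [← hkey]
        _ ≤ |(x₁ - x₂) * (1 - Beps β ε y₁)| + |x₂ * (Beps β ε y₂ - Beps β ε y₁)| := abs_add_le _ _
        _ = |x₁ - x₂| * |1 - Beps β ε y₁| + |x₂| * |Beps β ε y₂ - Beps β ε y₁| := by
            rw [abs_mul, abs_mul]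
    have hd0 : (0:ℝ) ≤ |x₁ - x₂| := abs_nonneg _
    have step1 : |x₁ - x₂| * |1 - Beps β ε y₁| ≤ |x₁ - x₂| * (4 * ε * M) :=
      mul_le_mul_of_nonneg_left (h1B y₁) hd0
    have step2 : |x₂| * |Beps β ε y₂ - Beps β ε y₁| ≤ (A * ε) * (8 * ε * Kb * ‖y₁ - y₂‖) :=
      mul_le_mul hx₂abs (hBB y₁ y₂) (abs_nonneg _) (by positivity)
    have step4 : (A * ε) * (8 * ε * Kb * ‖y₁ - y₂‖)
        ≤ (A * ε) * (8 * ε * Kb * (2 * T * |x₁ - x₂|)) := by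
      have h8 : 8 * ε * Kb * ‖y₁ - y₂‖ ≤ 8 * ε * Kb * (2 * T * |x₁ - x₂|) :=
        mul_le_mul_of_nonneg_left he (by positivity)
      exact mul_le_mul_of_nonneg_left h8 (by positivity)
    have c1 : |x₁ - x₂| ≤ |x₁ - x₂| * (4 * ε * M)
        + (A * ε) * (8 * ε * Kb * (2 * T * |x₁ - x₂|)) := by linarith
    have hεε : ε * ε ≤ ε := by nlinarith
    have h_a := mul_le_mul_of_nonneg_right hcontr hd0
    have h_b := mul_le_mul_of_nonneg_right hεε
      (show (0:ℝ) ≤ 16 * A * Kb * T * |x₁ - x₂| by positivity)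
    have hle : |x₁ - x₂| ≤ 0 := by nlinarith [c1, h_a, h_b]
    have hx : x₁ = x₂ := by
      have : |x₁ - x₂| = 0 := le_antisymm hle hd0
      have := abs_eq_zero.mp this
      linarith [sub_eq_zero.mp this]
    exact Prod.ext hx (yeq_of_xeq hx)
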